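/- The terminating q-binomial theorem: for a nonnegative integer n and complex numbers q, z with q ≠ 0, the sum over j from 0 to n of ((q^{-n};q)_j / (q;q)_j) · z^j equals (z q^{-n}; q)_n, where (a;q)_k = ∏_{i=0}^{k-1} (1 - a q^i). -/
import Mathlib


/-- Finite q-shifted factorial: (x;q)_n = ∏_{i=0}^{n-1} (1 - x q^i). -/
noncomputable def qp (x q : ℂ) (n : ℕ) : ℂ := ∏ i ∈ Finset.range n, (1 - x * q ^ i)

/-- Infinite q-shifted factorial: (x;q)_∞ = ∏_{j=0}^∞ (1 - x q^j). -/
noncomputable def qpInf (x q : ℂ) : ℂ := ∏' j : ℕ, (1 - x * q ^ j)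

/-- q-shifted factorial with integer index: (x;q)_k = (x;q)_∞ / (x q^k;q)_∞. -/
noncomputable def qpZ (x q : ℂ) (k : ℤ) : ℂ := qpInf x q / qpInf (x * q ^ k) q

lemma qp_succ (x q : ℂ) (n : ℕ) : qp x q (n + 1) = qp x q n * (1 - x * q ^ n) :=
  Finset.prod_range_succ _ _

lemma qp_succ' (x q : ℂ) (n : ℕ) : qp x q (n + 1) = (1 - x) * qp (x * q) q n := by
  rw [qp, Finset.prod_range_succ', qp]
  simp only [pow_zero, mul_one]
  rw [mul_comm]
  congr 1
  refine Finset.prod_congr rfl fun i _ => ?_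
  rw [pow_succ]
  ring

lemma key (q : ℂ) (hq : q ≠ 0) (n j : ℕ) (hD : qp q q j ≠ 0) (hD1 : qp q q (j + 1) ≠ 0) :
    qp (q ^ (n + 1))⁻¹ q (j + 1) / qp q q (j + 1)
      = qp (q ^ n)⁻¹ q (j + 1) / qp q q (j + 1)
        - (q ^ (n + 1))⁻¹ * (qp (q ^ n)⁻¹ q j / qp q q j) := by
  have h1 : (q ^ (n + 1))⁻¹ * q = (q ^ n)⁻¹ := by
    rw [pow_succ, mul_inv, mul_assoc, inv_mul_cancel₀ hq, mul_one]
  rw [qp_succ' _ q j, h1, qp_succ (q ^ n)⁻¹ q j, qp_succ q q j]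
  have hfac : (1 - q * q ^ j) ≠ 0 := by
    rw [qp_succ] at hD1
    exact (mul_ne_zero_iff.mp hD1).2
  have hpn : (q : ℂ) ^ n ≠ 0 := pow_ne_zero _ hq
  have hpn1 : (q : ℂ) ^ (n + 1) ≠ 0 := pow_ne_zero _ hq
  field_simp
  ring

lemma aux (n : ℕ) (q z : ℂ) (hq : q ≠ 0)
    (hden : ∀ j ≤ n, qp q q j ≠ 0) :
    ∑ j ∈ Finset.range (n + 1), qp (q ^ n)⁻¹ q j / qp q q j * z ^ j
      = qp (z * (q ^ n)⁻¹) q n := by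
  induction n with
  | zero => simp [qp]
  | succ n ih =>
    have hden' : ∀ j ≤ n, qp q q j ≠ 0 := fun j hj => hden j (Nat.le_succ_of_le hj)
    have IH := ih hden'
    have htop : qp (q ^ n)⁻¹ q (n + 1) = 0 := by
      rw [qp_succ, inv_mul_cancel₀ (pow_ne_zero n hq)]
      simp
    have step1 : ∑ j ∈ Finset.range (n + 2), qp (q ^ (n + 1))⁻¹ q j / qp q q j * z ^ j
        = ∑ j ∈ Finset.range (n + 2), qp (q ^ n)⁻¹ q j / qp q q j * z ^ j
          - (q ^ (n + 1))⁻¹ * z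
            * ∑ j ∈ Finset.range (n + 1), qp (q ^ n)⁻¹ q j / qp q q j * z ^ j := by
      rw [Finset.sum_range_succ' (fun j => qp (q ^ (n + 1))⁻¹ q j / qp q q j * z ^ j) (n + 1),
          Finset.sum_range_succ' (fun j => qp (q ^ n)⁻¹ q j / qp q q j * z ^ j) (n + 1),
          Finset.mul_sum]
      have hterm : ∀ j ∈ Finset.range (n + 1),
          qp (q ^ (n + 1))⁻¹ q (j + 1) / qp q q (j + 1) * z ^ (j + 1)
            = qp (q ^ n)⁻¹ q (j + 1) / qp q q (j + 1) * z ^ (j + 1)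
              - (q ^ (n + 1))⁻¹ * z * (qp (q ^ n)⁻¹ q j / qp q q j * z ^ j) := by
        intro j hj
        have hj' : j ≤ n := Nat.lt_succ_iff.mp (Finset.mem_range.mp hj)
        rw [key q hq n j (hden j (Nat.le_succ_of_le hj')) (hden (j + 1) (Nat.succ_le_succ hj'))]
        ring
      rw [Finset.sum_congr rfl hterm, Finset.sum_sub_distrib]
      simp only [qp, Finset.range_zero, Finset.prod_empty, pow_zero]
      ring
    rw [step1, Finset.sum_range_succ, htop, IH]
    have h1 : z * (q ^ (n + 1))⁻¹ * q = z * (q ^ n)⁻¹ := by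
      rw [pow_succ, mul_inv, mul_assoc, mul_assoc, inv_mul_cancel₀ hq, mul_one]
    rw [qp_succ' (z * (q ^ (n + 1))⁻¹) q n, h1]
    ring

/-- Terminating q-binomial theorem. -/
theorem terminating_q_binomial (n : ℕ) (q z : ℂ) (hq : q ≠ 0)
    (hden : ∀ j ≤ n, qp q q j ≠ 0) :
    ∑ j ∈ Finset.range (n + 1), qp (q ^ (-(n : ℤ))) q j / qp q q j * z ^ j
      = qp (z * q ^ (-(n : ℤ))) q n := by
  simp only [zpow_neg, zpow_natCast]
  exact aux n q z hq hden
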